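/- Fix a distribution P over nonempty coalitions of N = {1,...,n} and δ, Δ ∈ (0,1). Encode each coalition S as the vector z^S = (χ_S, −w(S), 1, 1) ∈ ℝ^{n+3} where χ_S ∈ {0,1}^n is the indicator of S. Consider the function class F = { z ↦ sign(w·z) : w = (π, 1, π₀, ε), π ∈ ℝ₊^n, π₀ ≥ 0, Σᵢ πᵢ + π₀ = w(N) }. If (π̂, π̂₀, ε̂) is any feasible solution of the quadratic program over m = O((n + log(1/Δ))/δ²) coalitions S₁,...,S_m sampled i.i.d. from P (so that Σ_{i∈S_k} π̂ᵢ + π̂₀ + ε̂ ≥ w(S_k) for all k), then with probability at least 1 − Δ, Pr_{S~P}[ Σ_{i∈S} π̂ᵢ + π̂₀ + ε̂ − w(S) ≥ 0 ] ≥ 1 − δ; i.e., the solution is in the δ-probable core. -/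

import Mathlib

open scoped Classical

open Finset
noncomputable section
namespace Stmt8

/-- real-valued indicator of a proposition -/
def Iv (p : Prop) : ℝ := if p then 1 else 0

lemma Iv_nonneg (p : Prop) : 0 ≤ Iv p := by unfold Iv; split <;> norm_num
lemma Iv_le_one (p : Prop) : Iv p ≤ 1 := by unfold Iv; split <;> norm_num
lemma Iv_true {p : Prop} (h : p) : Iv p = 1 := by simp [Iv, h]
lemma Iv_false {p : Prop} (h : ¬ p) : Iv p = 0 := by simp [Iv, h]
lemma Iv_mono {p q : Prop} (h : p → q) : Iv p ≤ Iv q := by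
  by_cases hp : p
  · rw [Iv_true hp, Iv_true (h hp)]
  · rw [Iv_false hp]; exact Iv_nonneg q
lemma Iv_mul_self (p : Prop) : Iv p * Iv p = Iv p := by
  unfold Iv; split <;> norm_num

section Prob
variable {Ω : Type*} [Fintype Ω] {m : ℕ} (P : Ω → ℝ)

/-- product weight on the space of sample sequences -/
def W (f : Fin m → Ω) : ℝ := ∏ k, P (f k)

lemma W_nonneg (hP : ∀ x, 0 ≤ P x) (f : Fin m → Ω) : 0 ≤ W P f :=
  Finset.prod_nonneg fun k _ => hP _

lemma sum_fn_prod (h : Fin m → Ω → ℝ) :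
    ∑ f : Fin m → Ω, ∏ k, h k (f k) = ∏ k, ∑ x, h k x :=
  (Fintype.prod_sum h).symm

lemma sum_W (h1 : ∑ x, P x = 1) : ∑ f : Fin m → Ω, W P f = 1 := by
  have := sum_fn_prod (m := m) (fun _ : Fin m => P)
  simp only [W, this, h1, prod_const_one]

/-- expectation of a product of coordinate functions -/
lemma exp_prod (g : Fin m → Ω → ℝ) :
    ∑ f : Fin m → Ω, W P f * ∏ k, g k (f k) = ∏ k, ∑ x, P x * g k x := by
  rw [← sum_fn_prod (fun k x => P x * g k x)]
  congr 1; funext f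
  rw [W, ← Finset.prod_mul_distrib]

/-- single-coordinate marginal -/
lemma marg1 (h1 : ∑ x, P x = 1) (k₀ : Fin m) (φ : Ω → ℝ) :
    ∑ f : Fin m → Ω, W P f * φ (f k₀) = ∑ x, P x * φ x := by
  have h := exp_prod P (fun k x => if k = k₀ then φ x else 1)
  have e1 : ∀ f : Fin m → Ω, (∏ k, if k = k₀ then φ (f k) else 1) = φ (f k₀) := by
    intro f
    rw [Finset.prod_eq_single k₀ (fun b _ hb => by simp [hb]) (by simp)]
    simp
  have e2 : (∏ k, ∑ x, P x * (if k = k₀ then φ x else 1)) = ∑ x, P x * φ x := by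
    rw [Finset.prod_eq_single k₀ (fun b _ hb => by simp [hb, h1]) (by simp)]
    simp
  simp only [e1] at h
  rw [h, e2]

/-- two-coordinate marginal -/
lemma marg2 (h1 : ∑ x, P x = 1) {k₀ l₀ : Fin m} (hkl : k₀ ≠ l₀) (φ ψ : Ω → ℝ) :
    ∑ f : Fin m → Ω, W P f * (φ (f k₀) * ψ (f l₀))
      = (∑ x, P x * φ x) * (∑ x, P x * ψ x) := by
  have h := exp_prod P (fun k x => if k = k₀ then φ x else if k = l₀ then ψ x else 1)
  have hl : l₀ ∈ univ.erase k₀ := Finset.mem_erase.mpr ⟨hkl.symm, mem_univ l₀⟩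
  have e1 : ∀ f : Fin m → Ω,
      (∏ k, (if k = k₀ then φ (f k) else if k = l₀ then ψ (f k) else 1))
        = φ (f k₀) * ψ (f l₀) := by
    intro f
    rw [← Finset.mul_prod_erase univ _ (mem_univ k₀), if_pos rfl]
    rw [← Finset.mul_prod_erase (univ.erase k₀) _ hl]
    rw [if_neg hkl.symm, if_pos rfl]
    rw [Finset.prod_eq_one (fun b hb => by
      simp only [mem_erase] at hb
      rw [if_neg hb.2.1, if_neg hb.1])]
    ring
  have e2 : (∏ k, ∑ x, P x * (if k = k₀ then φ x else if k = l₀ then ψ x else 1))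
      = (∑ x, P x * φ x) * (∑ x, P x * ψ x) := by
    rw [← Finset.mul_prod_erase univ _ (mem_univ k₀)]
    rw [← Finset.mul_prod_erase (univ.erase k₀) _ hl]
    have t1 : (∑ x, P x * (if k₀ = k₀ then φ x else if k₀ = l₀ then ψ x else 1))
        = ∑ x, P x * φ x := by simp
    have t2 : (∑ x, P x * (if l₀ = k₀ then φ x else if l₀ = l₀ then ψ x else 1))
        = ∑ x, P x * ψ x := by simp [hkl.symm]
    rw [t1, t2, Finset.prod_eq_one (fun b hb => by
      simp only [mem_erase] at hb
      simp [hb.1, hb.2.1, h1])]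
    ring
  simp only [e1] at h
  rw [h, e2]


lemma Iv_not (p : Prop) : Iv (¬ p) = 1 - Iv p := by
  by_cases h : p
  · rw [Iv_true h, Iv_false (by exact fun hn => hn h)]; norm_num
  · rw [Iv_false h, Iv_true h]; norm_num

lemma Iv_card {m : ℕ} (p : Fin m → Prop) [DecidablePred p] :
    (((univ : Finset (Fin m)).filter p).card : ℝ) = ∑ k, Iv (p k) := by
  rw [Finset.card_filter]
  push_cast
  exact Finset.sum_congr rfl (fun k _ => by unfold Iv; split <;> norm_num)

/-- Chebyshev / second moment bound: with probability at least 1/2 the number of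
samples falling outside `U` is at least `r`. -/
lemma cheb (hP : ∀ x, 0 ≤ P x) (h1 : ∑ x, P x = 1) (U : Ω → Prop) (r : ℕ)
    (hq8 : 8 ≤ (∑ x, P x * Iv (¬ U x)) * m)
    (hr : (r : ℝ) ≤ (∑ x, P x * Iv (¬ U x)) * m / 2 + 1) :
    (1:ℝ)/2 ≤ ∑ f : Fin m → Ω, W P f * Iv (r ≤ ((univ.filter fun k => ¬ U (f k)).card)) := by
  set q : ℝ := ∑ x, P x * Iv (¬ U x) with hq
  have hq0 : 0 ≤ q := Finset.sum_nonneg fun x _ => mul_nonneg (hP x) (Iv_nonneg _)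
  have hq1 : q ≤ 1 := by
    calc q ≤ ∑ x, P x := Finset.sum_le_sum (fun x _ => by
            calc P x * Iv (¬ U x) ≤ P x * 1 :=
                  mul_le_mul_of_nonneg_left (Iv_le_one _) (hP x)
            _ = P x := mul_one _)
    _ = 1 := h1
  have hqm : (0:ℝ) < q * m := lt_of_lt_of_le (by norm_num) hq8
  set X : (Fin m → Ω) → ℝ := fun f => ∑ k, Iv (¬ U (f k)) with hX
  have E1 : ∑ f : Fin m → Ω, W P f * X f = q * m := by
    simp only [hX, Finset.mul_sum]
    rw [Finset.sum_comm]
    rw [Finset.sum_congr rfl (fun k _ => marg1 P h1 k (fun x => Iv (¬ U x)))]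
    simp [mul_comm]
    exact Or.inl hq.symm
  have E2 : ∑ f : Fin m → Ω, W P f * (X f)^2 = q * m + (q^2 * m^2 - q^2 * m) := by
    have expand : ∀ f : Fin m → Ω, W P f * (X f)^2
        = ∑ k, ∑ l, W P f * (Iv (¬ U (f k)) * Iv (¬ U (f l))) := by
      intro f
      rw [sq, hX, Finset.sum_mul_sum]
      simp [Finset.mul_sum]
    rw [Finset.sum_congr rfl fun f _ => expand f]
    rw [Finset.sum_comm]
    have inner : ∀ k : Fin m, (∑ f : Fin m → Ω, ∑ l, W P f * (Iv (¬ U (f k)) * Iv (¬ U (f l))))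
        = q + q^2 * (m - 1) := by
      intro k
      rw [Finset.sum_comm]
      have swap : ∀ l : Fin m, (∑ f : Fin m → Ω, W P f * (Iv (¬ U (f k)) * Iv (¬ U (f l))))
          = ∑ f : Fin m → Ω, W P f * (Iv (¬ U (f l)) * Iv (¬ U (f k))) := by
        intro l; exact Finset.sum_congr rfl fun f _ => by ring
      have hterm : ∀ l : Fin m, (∑ f : Fin m → Ω, W P f * (Iv (¬ U (f k)) * Iv (¬ U (f l))))
          = if l = k then q else q^2 := by
        intro l
        by_cases hlk : l = k
        · subst hlk
          rw [if_pos rfl]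
          rw [Finset.sum_congr rfl fun f _ => by rw [Iv_mul_self]]
          exact marg1 P h1 l (fun x => Iv (¬ U x))
        · rw [if_neg hlk, swap l]
          rw [marg2 P h1 (hlk : l ≠ k) (fun x => Iv (¬ U x)) (fun x => Iv (¬ U x))]
          rw [sq]
      rw [Finset.sum_congr rfl fun l _ => hterm l]
      have split : ∀ l : Fin m, (if l = k then q else q^2)
          = q^2 + (if l = k then q - q^2 else 0) := by intro l; split <;> ring
      rw [Finset.sum_congr rfl fun l _ => split l, Finset.sum_add_distrib,
        Finset.sum_const, Finset.sum_ite_eq' univ k (fun _ => q - q^2)]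
      simp only [mem_univ, if_true, card_univ, Fintype.card_fin, nsmul_eq_mul]
      ring
    rw [Finset.sum_congr rfl fun k _ => inner k, Finset.sum_const, card_univ,
      Fintype.card_fin, nsmul_eq_mul]
    ring
  -- variance bound
  have hWsum : ∑ f : Fin m → Ω, W P f = 1 := sum_W P h1
  have Var : ∑ f : Fin m → Ω, W P f * (X f - q * m)^2 = q * m * (1 - q) := by
    have expand : ∀ f : Fin m → Ω, W P f * (X f - q * m)^2
        = W P f * (X f)^2 - (2 * (q * m)) * (W P f * X f) + (q * m)^2 * W P f := by
      intro f; ring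
    rw [Finset.sum_congr rfl fun f _ => expand f]
    rw [Finset.sum_add_distrib, Finset.sum_sub_distrib, ← Finset.mul_sum, ← Finset.mul_sum]
    rw [E1, E2, hWsum]
    ring
  have hVar : ∑ f : Fin m → Ω, W P f * (X f - q * m)^2 ≤ q * m := by
    rw [Var]
    nlinarith [hqm]
  -- Markov
  have key : ∀ f : Fin m → Ω,
      W P f * Iv (¬ (r ≤ (univ.filter fun k => ¬ U (f k)).card)) * (q * m / 2)^2
        ≤ W P f * (X f - q * m)^2 := by
    intro f
    by_cases hc : (r ≤ (univ.filter fun k => ¬ U (f k)).card)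
    · rw [Iv_false (by exact fun h => h hc)]
      have := W_nonneg P hP f
      nlinarith [sq_nonneg (X f - q * m)]
    · rw [Iv_true hc]
      have hXval : X f = ((univ.filter fun k => ¬ U (f k)).card : ℝ) :=
        (Iv_card (fun k => ¬ U (f k))).symm
      have hcard : ((univ.filter fun k => ¬ U (f k)).card : ℝ) ≤ (r : ℝ) - 1 := by
        have h2 : (univ.filter fun k => ¬ U (f k)).card + 1 ≤ r :=
          Nat.succ_le_of_lt (Nat.lt_of_not_le hc)
        have := (Nat.cast_le (α := ℝ)).mpr h2
        push_cast at this
        linarith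
      have hXle : X f ≤ q * m / 2 := by rw [hXval]; linarith
      have hsq : (q * m / 2)^2 ≤ (X f - q * m)^2 := by nlinarith
      have := W_nonneg P hP f
      calc W P f * 1 * (q * m / 2)^2 = W P f * (q * m / 2)^2 := by ring
      _ ≤ W P f * (X f - q * m)^2 := mul_le_mul_of_nonneg_left hsq this
  have hSbad : (∑ f : Fin m → Ω, W P f * Iv (¬ (r ≤ (univ.filter fun k => ¬ U (f k)).card)))
      * (q * m / 2)^2 ≤ q * m := by
    rw [Finset.sum_mul]
    exact le_trans (Finset.sum_le_sum fun f _ => key f) hVar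
  set Sbad : ℝ := ∑ f : Fin m → Ω, W P f * Iv (¬ (r ≤ (univ.filter fun k => ¬ U (f k)).card))
    with hSdef
  have hS0 : 0 ≤ Sbad := Finset.sum_nonneg fun f _ =>
    mul_nonneg (W_nonneg P hP f) (Iv_nonneg _)
  have hSbhalf : Sbad ≤ 1/2 := by
    nlinarith [hSbad, hq8, hS0, hqm,
      mul_nonneg (mul_nonneg hS0 hqm.le) (by linarith : (0:ℝ) ≤ q * m - 8)]
  have final : (∑ f : Fin m → Ω, W P f * Iv (r ≤ ((univ.filter fun k => ¬ U (f k)).card)))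
      = 1 - Sbad := by
    rw [hSdef, ← hWsum, ← Finset.sum_sub_distrib]
    exact Finset.sum_congr rfl fun f _ => by
      rw [Iv_not]; ring
  rw [final]
  linarith

end Prob

/-- bound on partial binomial sums : `∑_{i ≤ D} C(N,i) ≤ (N/D)^D e^D` -/
lemma binom_bound (N D : ℕ) (hD : 1 ≤ D) (hDN : D ≤ N) :
    (∑ i ∈ range (D+1), (N.choose i : ℝ)) ≤ ((N:ℝ) / D)^D * Real.exp D := by
  have hN0 : (0:ℝ) < N := by
    have : (1:ℕ) ≤ N := le_trans hD hDN
    exact_mod_cast Nat.lt_of_lt_of_le Nat.zero_lt_one this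
  have hD0 : (0:ℝ) < D := by exact_mod_cast hD
  set x : ℝ := (D:ℝ) / N with hxdef
  have hx0 : 0 < x := div_pos hD0 hN0
  have hx1 : x ≤ 1 := by
    rw [hxdef, div_le_one hN0]
    exact_mod_cast hDN
  have hxD : 0 < x ^ D := pow_pos hx0 D
  have step1 : (∑ i ∈ range (D+1), (N.choose i : ℝ)) * x ^ D
      ≤ ∑ i ∈ range (D+1), (N.choose i : ℝ) * x ^ i := by
    rw [Finset.sum_mul]
    apply Finset.sum_le_sum
    intro i hi
    apply mul_le_mul_of_nonneg_left _ (by positivity)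
    exact pow_le_pow_of_le_one hx0.le hx1 (Nat.lt_succ_iff.mp (Finset.mem_range.mp hi))
  have step2 : (∑ i ∈ range (D+1), (N.choose i : ℝ) * x ^ i)
      ≤ ∑ i ∈ range (N+1), (N.choose i : ℝ) * x ^ i := by
    apply Finset.sum_le_sum_of_subset_of_nonneg
    · exact Finset.range_subset_range.mpr (by omega)
    · intro i _ _; positivity
  have step3 : (∑ i ∈ range (N+1), (N.choose i : ℝ) * x ^ i) = (1 + x) ^ N := by
    rw [add_comm (1:ℝ) x, add_pow]
    exact Finset.sum_congr rfl fun i _ => by ring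
  have step4 : (1 + x) ^ N ≤ Real.exp D := by
    have h1 : (1 + x) ≤ Real.exp x := by
      have := Real.add_one_le_exp x; linarith
    have h2 : (1 + x) ^ N ≤ (Real.exp x) ^ N :=
      pow_le_pow_left₀ (by positivity) h1 N
    have h3 : (Real.exp x) ^ N = Real.exp (x * N) := by
      rw [← Real.exp_nat_mul]; ring_nf
    have h4 : x * N = D := by
      rw [hxdef]; field_simp
    rw [h3, h4] at h2
    exact h2
  have : (∑ i ∈ range (D+1), (N.choose i : ℝ)) * x ^ D ≤ Real.exp D := by
    calc (∑ i ∈ range (D+1), (N.choose i : ℝ)) * x ^ D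
        ≤ ∑ i ∈ range (D+1), (N.choose i : ℝ) * x ^ i := step1
    _ ≤ ∑ i ∈ range (N+1), (N.choose i : ℝ) * x ^ i := step2
    _ = (1 + x) ^ N := step3
    _ ≤ Real.exp D := step4
  have hfin : (∑ i ∈ range (D+1), (N.choose i : ℝ)) ≤ Real.exp D / x ^ D :=
    (le_div_iff₀ hxD).mpr this
  calc (∑ i ∈ range (D+1), (N.choose i : ℝ)) ≤ Real.exp D / x ^ D := hfin
  _ = ((N:ℝ) / D)^D * Real.exp D := by
      rw [hxdef, div_pow, div_div_eq_mul_div, div_pow]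
      field_simp

section Game
variable {n : ℕ} (w : Finset (Fin n) → ℝ)

/-- satisfaction of the (relaxed) core constraint for coalition `S` -/
def sat (π : Fin n → ℝ) (c : ℝ) (S : Finset (Fin n)) : Prop :=
  w S ≤ (∑ i ∈ S, π i) + c

/-- Dudley-type VC dimension bound for the linear core-constraint class -/
lemma vc_dudley {ι : Type*} [Fintype ι] [DecidableEq ι] (q : ι → Finset (Fin n))
    (F : Finset (Finset ι))
    (hF : ∀ u ∈ F, ∃ π c, u = univ.filter (fun j => sat w π c (q j)))
    (A : Finset ι) (hsh : F.Shatters A) : A.card ≤ n + 2 := by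
  by_contra hcon
  push_neg at hcon
  obtain ⟨B, hBA, hBcard⟩ := Finset.exists_subset_card_eq (by omega : n + 3 ≤ A.card)
  have hshB : F.Shatters B := hsh.mono_right hBA
  -- enumeration of B
  have hBk : B.card = n + 3 := hBcard
  let e : Fin (n+3) ≃ {x // x ∈ B} := (finCongr hBk.symm).trans B.equivFin.symm
  let a : Fin (n+3) → ι := fun i => (e i : ι)
  have ainj : Function.Injective a := Subtype.val_injective.comp e.injective
  have amem : ∀ i, a i ∈ B := fun i => (e i).2
  -- the evaluation linear map
  let Λ : ((Fin n → ℝ) × ℝ × ℝ) →ₗ[ℝ] EuclideanSpace ℝ (Fin (n+3)) :=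
    { toFun := fun θ => WithLp.toLp 2 (fun i => (∑ i' ∈ q (a i), θ.1 i') + θ.2.1 + θ.2.2 * (- w (q (a i)))
        : Fin (n+3) → ℝ)
      map_add' := by
        intro θ η
        ext i
        show (∑ i' ∈ q (a i), (θ.1 i' + η.1 i')) + (θ.2.1 + η.2.1)
            + (θ.2.2 + η.2.2) * (- w (q (a i)))
          = ((∑ i' ∈ q (a i), θ.1 i') + θ.2.1 + θ.2.2 * (- w (q (a i))))
            + ((∑ i' ∈ q (a i), η.1 i') + η.2.1 + η.2.2 * (- w (q (a i))))
        rw [Finset.sum_add_distrib]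
        ring
      map_smul' := by
        intro d θ
        ext i
        show (∑ i' ∈ q (a i), d * θ.1 i') + d * θ.2.1 + (d * θ.2.2) * (- w (q (a i)))
          = d * ((∑ i' ∈ q (a i), θ.1 i') + θ.2.1 + θ.2.2 * (- w (q (a i))))
        rw [← Finset.mul_sum]
        ring }
  have hrank : LinearMap.range Λ ≠ ⊤ := by
    intro htop
    have h1 := LinearMap.finrank_range_le Λ
    rw [htop, finrank_top] at h1
    have hdom : Module.finrank ℝ ((Fin n → ℝ) × ℝ × ℝ) = n + 2 := by
      simp [Module.finrank_prod, Module.finrank_pi]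
    have hcod : Module.finrank ℝ (EuclideanSpace ℝ (Fin (n+3))) = n + 3 :=
      finrank_euclideanSpace_fin
    rw [hdom, hcod] at h1
    omega
  have hne : (LinearMap.range Λ)ᗮ ≠ ⊥ := by
    rw [Ne, Submodule.orthogonal_eq_bot_iff]
    exact hrank
  obtain ⟨γ, hγmem, hγ0⟩ := Submodule.ne_bot_iff _ |>.mp hne
  have horth : ∀ θ : (Fin n → ℝ) × ℝ × ℝ, (∑ i, (Λ θ) i * γ i) = 0 := by
    intro θ
    have := (Submodule.mem_orthogonal _ _).mp hγmem (Λ θ) (LinearMap.mem_range_self Λ θ)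
    rw [PiLp.inner_apply] at this
    simpa [RCLike.inner_apply, starRingEnd_apply, mul_comm] using this
  -- a coordinate where γ is nonzero
  have hex : ∃ i, γ i ≠ 0 := by
    by_contra hall
    push_neg at hall
    exact hγ0 (by ext i; simpa using hall i)
  obtain ⟨i₁, hi₁⟩ := hex
  set s : ℝ := if 0 < γ i₁ then 1 else -1 with hsdef
  have hs : 0 < s * γ i₁ := by
    rcases lt_trichotomy (γ i₁) 0 with h | h | h
    · rw [hsdef, if_neg (by linarith)]; nlinarith
    · exact absurd h hi₁
    · rw [hsdef, if_pos h]; nlinarith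
  -- the labeling realized by shattering
  set t : Finset ι := (univ.filter (fun i => s * γ i ≤ 0)).image a with htdef
  have htB : t ⊆ B := by
    rw [htdef]
    intro j hj
    obtain ⟨i, _, rfl⟩ := Finset.mem_image.mp hj
    exact amem i
  obtain ⟨u, huF, hut⟩ := hshB htB
  obtain ⟨π, c, huq⟩ := hF u huF
  have label : ∀ i : Fin (n+3), (sat w π c (q (a i)) ↔ s * γ i ≤ 0) := by
    intro i
    have h1 : a i ∈ t ↔ s * γ i ≤ 0 := by
      rw [htdef]
      constructor
      · intro h
        obtain ⟨i', hi', hai⟩ := Finset.mem_image.mp h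
        rw [← ainj hai]
        exact (Finset.mem_filter.mp hi').2
      · intro h
        exact Finset.mem_image.mpr ⟨i, Finset.mem_filter.mpr ⟨mem_univ i, h⟩, rfl⟩
    have h2 : a i ∈ t ↔ a i ∈ u := by
      rw [← hut]
      simp [Finset.mem_inter, amem i]
    have h3 : a i ∈ u ↔ sat w π c (q (a i)) := by
      rw [huq]; simp
    rw [← h1, h2, h3]
  -- derive the contradiction
  set g : Fin (n+3) → ℝ := fun i => (∑ i' ∈ q (a i), π i') + c - w (q (a i)) with hgdef
  have hsum0 : (∑ i, (s * γ i) * g i) = 0 := by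
    have h := horth (π, c, 1)
    have heval : ∀ i, (Λ (π, c, 1)) i = g i := by
      intro i
      show (∑ i' ∈ q (a i), π i') + c + 1 * (- w (q (a i))) = g i
      rw [hgdef]; ring
    have h2 : (∑ i, g i * γ i) = 0 := by
      rw [← h]; exact Finset.sum_congr rfl fun i _ => by rw [heval]
    calc (∑ i, (s * γ i) * g i) = s * ∑ i, g i * γ i := by
          rw [Finset.mul_sum]; exact Finset.sum_congr rfl fun i _ => by ring
    _ = 0 := by rw [h2, mul_zero]
  have hterm : ∀ i : Fin (n+3), (s * γ i) * g i ≤ 0 := by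
    intro i
    by_cases hi : s * γ i ≤ 0
    · have hg : 0 ≤ g i := by
        have := (label i).mpr hi
        rw [sat] at this
        rw [hgdef]; dsimp only; linarith
      exact mul_nonpos_of_nonpos_of_nonneg hi hg
    · push_neg at hi
      have hg : g i < 0 := by
        have hns : ¬ sat w π c (q (a i)) := fun hsat => absurd ((label i).mp hsat) (by linarith)
        rw [sat] at hns
        push_neg at hns
        rw [hgdef]; dsimp only; linarith
      exact le_of_lt (mul_neg_of_pos_of_neg hi hg)
  set i₀ : Fin (n+3) := i₁ with hi0def
  have hstrict : (s * γ i₀) * g i₀ < 0 := by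
    have hg : g i₀ < 0 := by
      have hns : ¬ sat w π c (q (a i₀)) := fun hsat => absurd ((label i₀).mp hsat) (by push_neg; exact hs)
      rw [sat] at hns
      push_neg at hns
      rw [hgdef]; dsimp only; linarith
    exact mul_neg_of_pos_of_neg hs hg
  have : (∑ i, (s * γ i) * g i) < 0 := by
    rw [← Finset.add_sum_erase univ _ (mem_univ i₀)]
    have : ∑ i ∈ univ.erase i₀, (s * γ i) * g i ≤ 0 :=
      Finset.sum_nonpos fun i _ => hterm i
    linarith
  rw [hsum0] at this
  exact lt_irrefl 0 this

/-- Sauer–Shelah bound for the trace family of the linear class -/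
lemma trace_card_le {ι : Type*} [Fintype ι] [DecidableEq ι] (q : ι → Finset (Fin n))
    (F : Finset (Finset ι))
    (hF : ∀ u ∈ F, ∃ π c, u = univ.filter (fun j => sat w π c (q j))) :
    F.card ≤ ∑ i ∈ range (n+3), (Fintype.card ι).choose i := by
  refine le_trans (Finset.card_le_card_shatterer F) ?_
  have hsub : F.shatterer ⊆ (range (n+3)).biUnion (fun i => Finset.powersetCard i univ) := by
    intro sA hsA
    have hsh := Finset.mem_shatterer.mp hsA
    have hcard : sA.card ≤ n + 2 := vc_dudley w q F hF sA hsh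
    apply Finset.mem_biUnion.mpr
    exact ⟨sA.card, Finset.mem_range.mpr (by omega),
      Finset.mem_powersetCard.mpr ⟨Finset.subset_univ sA, rfl⟩⟩
  refine le_trans (Finset.card_le_card hsub) ?_
  refine le_trans (Finset.card_biUnion_le) ?_
  apply Finset.sum_le_sum
  intro i _
  rw [Finset.card_powersetCard, Finset.card_univ]

end Game

section Swap
variable {n m : ℕ} (w : Finset (Fin n) → ℝ) (P : Finset (Fin n) → ℝ)

/-- the bad event on the double sample -/
def B1 (r : ℕ) (zs : Fin m → (Finset (Fin n) × Finset (Fin n))) : Prop :=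
  ∃ π c, (∀ k, sat w π c (zs k).1) ∧
    r ≤ ((univ : Finset (Fin m)).filter (fun k => ¬ sat w π c (zs k).2)).card

/-- the swapped double sample -/
def act (σ : Fin m → Bool) (zs : Fin m → (Finset (Fin n) × Finset (Fin n))) :
    Fin m → (Finset (Fin n) × Finset (Fin n)) :=
  fun k => if σ k then ((zs k).2, (zs k).1) else zs k

lemma act_invol (σ : Fin m → Bool) : Function.Involutive (act (n := n) (m := m) σ) := by
  intro zs
  funext k
  by_cases h : σ k <;> simp [act, h]

lemma swap_bound (hP : ∀ x, 0 ≤ P x) (h1 : ∑ x, P x = 1) (r : ℕ) :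
    ∑ zs : Fin m → (Finset (Fin n) × Finset (Fin n)),
        W (fun z => P z.1 * P z.2) zs * Iv (B1 w r zs)
      ≤ (∑ i ∈ range (n+3), ((m+m).choose i : ℝ)) * (1/2)^r := by
  classical
  set P2 : (Finset (Fin n) × Finset (Fin n)) → ℝ := fun z => P z.1 * P z.2 with hP2def
  have hP2 : ∀ z, 0 ≤ P2 z := fun z => mul_nonneg (hP _) (hP _)
  have h12 : ∑ z : Finset (Fin n) × Finset (Fin n), P2 z = 1 := by
    rw [Fintype.sum_prod_type]
    rw [show (∑ a : Finset (Fin n), ∑ b : Finset (Fin n), P2 (a, b))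
        = (∑ a : Finset (Fin n), P a * ∑ b : Finset (Fin n), P b) from
      Finset.sum_congr rfl fun a _ => by rw [Finset.mul_sum]]
    rw [h1]
    simpa using h1
  have hW2sum : ∑ zs : Fin m → (Finset (Fin n) × Finset (Fin n)), W P2 zs = 1 :=
    sum_W P2 h12
  -- invariance under swaps
  have hWinv : ∀ (σ : Fin m → Bool) zs, W P2 (act σ zs) = W P2 zs := by
    intro σ zs
    unfold W
    apply Finset.prod_congr rfl
    intro k _
    by_cases h : σ k <;> simp [act, h, hP2def, mul_comm]
  have hinv : ∀ σ : Fin m → Bool,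
      (∑ zs : Fin m → (Finset (Fin n) × Finset (Fin n)), W P2 zs * Iv (B1 w r zs))
        = ∑ zs : Fin m → (Finset (Fin n) × Finset (Fin n)), W P2 zs * Iv (B1 w r (act σ zs)) := by
    intro σ
    have hb := Fintype.sum_bijective (act σ) ((act_invol (n := n) (m := m) σ).bijective)
      (fun zs => W P2 (act σ zs) * Iv (B1 w r (act σ zs)))
      (fun zs => W P2 zs * Iv (B1 w r zs)) (fun zs => rfl)
    rw [← hb]
    apply Finset.sum_congr rfl
    intro zs _
    show W P2 (act σ zs) * Iv (B1 w r (act σ zs)) = W P2 zs * Iv (B1 w r (act σ zs))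
    rw [hWinv σ zs]
  -- the per-sample combinatorial bound
  have main : ∀ zs : Fin m → (Finset (Fin n) × Finset (Fin n)),
      (∑ σ : Fin m → Bool, Iv (B1 w r (act σ zs)))
        ≤ (∑ i ∈ range (n+3), ((m+m).choose i : ℝ)) * (2^m * (1/2)^r) := by
    intro zs
    set q : (Fin m ⊕ Fin m) → Finset (Fin n) :=
      Sum.elim (fun k => (zs k).1) (fun k => (zs k).2) with hqdef
    set Fam : Finset (Finset (Fin m ⊕ Fin m)) :=
      Set.Finite.toFinset (Set.toFinite
        {u : Finset (Fin m ⊕ Fin m) | ∃ π c, u = univ.filter (fun j => sat w π c (q j))})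
      with hFamdef
    have hFam : ∀ u ∈ Fam, ∃ π c, u = univ.filter (fun j => sat w π c (q j)) := by
      intro u hu
      rw [hFamdef, Set.Finite.mem_toFinset] at hu
      exact hu
    have hFcard : (Fam.card : ℝ) ≤ ∑ i ∈ range (n+3), ((m+m).choose i : ℝ) := by
      have := trace_card_le w q Fam hFam
      have hcard : Fintype.card (Fin m ⊕ Fin m) = m + m := by
        simp [Fintype.card_sum]
      rw [hcard] at this
      calc (Fam.card : ℝ) ≤ ((∑ i ∈ range (n+3), (m+m).choose i : ℕ) : ℝ) := by
            exact_mod_cast this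
      _ = ∑ i ∈ range (n+3), ((m+m).choose i : ℝ) := by push_cast; ring
    -- the per-trace condition
    set condV : Finset (Fin m ⊕ Fin m) → (Fin m → Bool) → Prop :=
      fun V σ => (∀ k, (if σ k then Sum.inr k ∈ V else Sum.inl k ∈ V)) ∧
        r ≤ ((univ : Finset (Fin m)).filter
          (fun k => ¬ (if σ k then Sum.inl k ∈ V else Sum.inr k ∈ V))).card with hconddef
    have c1 : ∀ σ : Fin m → Bool, B1 w r (act σ zs) → ∃ V ∈ Fam, condV V σ := by
      intro σ hB
      obtain ⟨π, c, hcons, hcount⟩ := hB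
      refine ⟨univ.filter (fun j => sat w π c (q j)), ?_, ?_, ?_⟩
      · rw [hFamdef, Set.Finite.mem_toFinset]
        exact ⟨π, c, rfl⟩
      · intro k
        have hk := hcons k
        unfold act at hk
        by_cases h : σ k = true
        · rw [if_pos h] at hk ⊢
          simp only [Finset.mem_filter, mem_univ, true_and, hqdef, Sum.elim_inr]
          exact hk
        · rw [if_neg h] at hk ⊢
          simp only [Finset.mem_filter, mem_univ, true_and, hqdef, Sum.elim_inl]
          exact hk
      · refine le_trans hcount (le_of_eq ?_)
        congr 1
        apply Finset.filter_congr
        intro k _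
        unfold act
        by_cases h : σ k = true
        · rw [if_pos h, if_pos h]
          simp [hqdef]
        · rw [if_neg h, if_neg h]
          simp [hqdef]
    have c2 : ∀ V : Finset (Fin m ⊕ Fin m),
        (∑ σ : Fin m → Bool, Iv (condV V σ)) ≤ 2^m * (1/2)^r := by
      intro V
      by_cases hex : ∃ σ₀, condV V σ₀
      · obtain ⟨σ₀, hσ₀⟩ := hex
        set M : Finset (Fin m) :=
          univ.filter (fun k => ¬ ((Sum.inl k ∈ V) ↔ (Sum.inr k ∈ V))) with hMdef
        -- the error set is contained in M
        have herr : ∀ σ, condV V σ →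
            ((univ : Finset (Fin m)).filter
              (fun k => ¬ (if σ k then Sum.inl k ∈ V else Sum.inr k ∈ V))) ⊆ M := by
          intro σ hσ k hk
          rw [Finset.mem_filter] at hk
          have h1 := hσ.1 k
          rw [hMdef, Finset.mem_filter]
          refine ⟨mem_univ k, ?_⟩
          by_cases h : σ k
          · rw [if_pos h] at h1 hk
            intro hiff
            exact hk.2 (hiff.mpr h1)
          · rw [if_neg h] at h1 hk
            intro hiff
            exact hk.2 (hiff.mp h1)
        have hrM : r ≤ M.card := le_trans hσ₀.2 (Finset.card_le_card (herr σ₀ hσ₀))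
        set forced : Fin m → Bool := fun k => if Sum.inl k ∈ V then false else true
          with hfdef
        have hforce : ∀ σ, condV V σ → ∀ k ∈ M, σ k = forced k := by
          intro σ hσ k hkM
          rw [hMdef, Finset.mem_filter] at hkM
          have h1 := hσ.1 k
          by_cases h : σ k
          · rw [if_pos h] at h1
            have hnl : Sum.inl k ∉ V := fun hl => hkM.2 ⟨fun _ => h1, fun _ => hl⟩
            rw [hfdef]
            simp [h, hnl]
          · rw [if_neg h] at h1
            have hnr : Sum.inr k ∉ V := fun hr => hkM.2 ⟨fun _ => hr, fun _ => h1⟩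
            rw [hfdef]
            simp [h, h1]
        have hbound : ∀ σ : Fin m → Bool,
            Iv (condV V σ) ≤ ∏ k, (if k ∈ M then Iv (σ k = forced k) else 1) := by
          intro σ
          by_cases hc : condV V σ
          · rw [Iv_true hc]
            rw [Finset.prod_eq_one]
            intro k _
            by_cases hkM : k ∈ M
            · rw [if_pos hkM, Iv_true (hforce σ hc k hkM)]
            · rw [if_neg hkM]
          · rw [Iv_false hc]
            exact Finset.prod_nonneg fun k _ => by
              by_cases hkM : k ∈ M
              · rw [if_pos hkM]; exact Iv_nonneg _
              · rw [if_neg hkM]; norm_num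
        have hsum : (∑ σ : Fin m → Bool, ∏ k, (if k ∈ M then Iv (σ k = forced k) else 1))
            = 2 ^ ((Mᶜ : Finset (Fin m)).card) := by
          rw [sum_fn_prod (fun k b => if k ∈ M then Iv (b = forced k) else 1)]
          have hfac : ∀ k : Fin m, (∑ b : Bool, if k ∈ M then Iv (b = forced k) else 1)
              = if k ∈ M then 1 else 2 := by
            intro k
            by_cases hkM : k ∈ M
            · simp only [if_pos hkM, Fintype.sum_bool]
              cases hf : forced k
              · rw [Iv_false (by simp [hf]), Iv_true (by simp [hf])]; norm_num
              · rw [Iv_true (by simp [hf]), Iv_false (by simp [hf])]; norm_num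
            · simp [hkM]
          rw [Finset.prod_congr rfl fun k _ => hfac k]
          rw [← Finset.prod_mul_prod_compl M]
          rw [Finset.prod_congr rfl (fun k hk => if_pos hk),
            Finset.prod_congr rfl (fun k hk => if_neg (Finset.mem_compl.mp hk))]
          rw [Finset.prod_const_one, Finset.prod_const, one_mul]
        have hcardle : (Mᶜ : Finset (Fin m)).card ≤ m - r := by
          rw [Finset.card_compl, Fintype.card_fin]
          omega
        have hpow : (2:ℝ) ^ ((Mᶜ : Finset (Fin m)).card) ≤ 2^m * (1/2)^r := by
          have hMm : M.card ≤ m := by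
            have := Finset.card_le_univ M
            simpa using this
          have h2 : (2:ℝ) ^ ((Mᶜ : Finset (Fin m)).card) ≤ (2:ℝ) ^ (m - r) :=
            pow_le_pow_right₀ (by norm_num) hcardle
          have h3 : (2:ℝ) ^ (m - r) * 2^r = 2^m := by
            rw [← pow_add]
            congr 1
            omega
          have h4 : (2:ℝ)^m * (1/2)^r = (2:ℝ)^(m-r) := by
            rw [← h3]
            have : (2:ℝ)^r * (1/2)^r = 1 := by
              rw [← mul_pow]; norm_num
            calc (2:ℝ)^(m-r) * 2^r * (1/2)^r = (2:ℝ)^(m-r) * ((2:ℝ)^r * (1/2)^r) := by ring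
              _ = (2:ℝ)^(m-r) := by rw [this, mul_one]
          rw [h4]
          exact h2
        calc (∑ σ : Fin m → Bool, Iv (condV V σ))
            ≤ ∑ σ : Fin m → Bool, ∏ k, (if k ∈ M then Iv (σ k = forced k) else 1) :=
              Finset.sum_le_sum fun σ _ => hbound σ
        _ = 2 ^ ((Mᶜ : Finset (Fin m)).card) := hsum
        _ ≤ 2^m * (1/2)^r := hpow
      · push_neg at hex
        rw [Finset.sum_eq_zero (fun σ _ => Iv_false (hex σ))]
        positivity
    -- combine c1 and c2
    have hpt : ∀ σ : Fin m → Bool, Iv (B1 w r (act σ zs)) ≤ ∑ V ∈ Fam, Iv (condV V σ) := by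
      intro σ
      by_cases hB : B1 w r (act σ zs)
      · obtain ⟨V, hVF, hV⟩ := c1 σ hB
        rw [Iv_true hB]
        calc (1:ℝ) = Iv (condV V σ) := (Iv_true hV).symm
        _ ≤ ∑ V ∈ Fam, Iv (condV V σ) :=
            Finset.single_le_sum (f := fun V' => Iv (condV V' σ))
              (fun V' _ => Iv_nonneg _) hVF
      · rw [Iv_false hB]
        exact Finset.sum_nonneg fun V _ => Iv_nonneg _
    calc (∑ σ : Fin m → Bool, Iv (B1 w r (act σ zs)))
        ≤ ∑ σ : Fin m → Bool, ∑ V ∈ Fam, Iv (condV V σ) :=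
          Finset.sum_le_sum fun σ _ => hpt σ
    _ = ∑ V ∈ Fam, ∑ σ : Fin m → Bool, Iv (condV V σ) := Finset.sum_comm
    _ ≤ ∑ V ∈ Fam, (2^m * (1/2)^r : ℝ) := Finset.sum_le_sum fun V _ => c2 V
    _ = (Fam.card : ℝ) * (2^m * (1/2)^r) := by rw [Finset.sum_const, nsmul_eq_mul]
    _ ≤ (∑ i ∈ range (n+3), ((m+m).choose i : ℝ)) * (2^m * (1/2)^r) := by
        apply mul_le_mul_of_nonneg_right hFcard
        positivity
  -- average over σ
  have hcardBool : (Fintype.card (Fin m → Bool) : ℝ) = 2^m := by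
    simp [Fintype.card_fun]
  have havg : (2:ℝ)^m * (∑ zs : Fin m → (Finset (Fin n) × Finset (Fin n)),
      W P2 zs * Iv (B1 w r zs))
      = ∑ zs : Fin m → (Finset (Fin n) × Finset (Fin n)),
          W P2 zs * (∑ σ : Fin m → Bool, Iv (B1 w r (act σ zs))) := by
    calc (2:ℝ)^m * (∑ zs, W P2 zs * Iv (B1 w r zs))
        = ∑ σ : Fin m → Bool, (∑ zs, W P2 zs * Iv (B1 w r zs)) := by
          rw [Finset.sum_const, nsmul_eq_mul, card_univ, hcardBool]
    _ = ∑ σ : Fin m → Bool, ∑ zs, W P2 zs * Iv (B1 w r (act σ zs)) :=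
          Finset.sum_congr rfl fun σ _ => hinv σ
    _ = ∑ zs, ∑ σ : Fin m → Bool, W P2 zs * Iv (B1 w r (act σ zs)) := Finset.sum_comm
    _ = ∑ zs, W P2 zs * (∑ σ : Fin m → Bool, Iv (B1 w r (act σ zs))) := by
          exact Finset.sum_congr rfl fun zs _ => by rw [Finset.mul_sum]
  have hrhs : (∑ zs : Fin m → (Finset (Fin n) × Finset (Fin n)),
      W P2 zs * (∑ σ : Fin m → Bool, Iv (B1 w r (act σ zs))))
      ≤ (∑ i ∈ range (n+3), ((m+m).choose i : ℝ)) * (2^m * (1/2)^r) := by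
    calc (∑ zs, W P2 zs * (∑ σ : Fin m → Bool, Iv (B1 w r (act σ zs))))
        ≤ ∑ zs, W P2 zs * ((∑ i ∈ range (n+3), ((m+m).choose i : ℝ)) * (2^m * (1/2)^r)) := by
          apply Finset.sum_le_sum
          intro zs _
          exact mul_le_mul_of_nonneg_left (main zs) (W_nonneg P2 hP2 zs)
    _ = (∑ i ∈ range (n+3), ((m+m).choose i : ℝ)) * (2^m * (1/2)^r) := by
          rw [← Finset.sum_mul, hW2sum, one_mul]
  have h2m : (0:ℝ) < 2^m := by positivity
  have := le_trans (le_of_eq havg) hrhs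
  nlinarith [this, h2m]


/-- single-sample bad event: some consistent solution has error mass more than δ -/
def Bad0 (δ : ℝ) (xs : Fin m → Finset (Fin n)) : Prop :=
  ∃ π c, (∀ k, sat w π c (xs k)) ∧ δ < ∑ x : Finset (Fin n), P x * Iv (¬ sat w π c x)

lemma symmetrize (hP : ∀ x, 0 ≤ P x) (h1 : ∑ x, P x = 1) (δ : ℝ) (r : ℕ)
    (hδ8 : 8 ≤ δ * m) (hr : (r : ℝ) ≤ δ * m / 2 + 1) :
    ∑ xs : Fin m → Finset (Fin n), W P xs * Iv (Bad0 w P δ xs)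
      ≤ 2 * ∑ zs : Fin m → (Finset (Fin n) × Finset (Fin n)),
          W (fun z => P z.1 * P z.2) zs * Iv (B1 w r zs) := by
  classical
  set P2 : (Finset (Fin n) × Finset (Fin n)) → ℝ := fun z => P z.1 * P z.2 with hP2def
  set wθ : (Fin m → Finset (Fin n)) → (Fin n → ℝ) × ℝ :=
    fun xs => if h : Bad0 w P δ xs then ⟨h.choose, h.choose_spec.choose⟩ else ⟨0, 0⟩
    with hwθdef
  have wspec : ∀ xs : Fin m → Finset (Fin n), Bad0 w P δ xs →
      (∀ k, sat w (wθ xs).1 (wθ xs).2 (xs k)) ∧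
        δ < ∑ x : Finset (Fin n), P x * Iv (¬ sat w (wθ xs).1 (wθ xs).2 x) := by
    intro xs h
    rw [hwθdef]
    simp only [dif_pos h]
    exact h.choose_spec.choose_spec
  set pair : (Fin m → Finset (Fin n)) → (Fin m → Finset (Fin n)) →
      (Fin m → Finset (Fin n) × Finset (Fin n)) :=
    fun xs ys k => (xs k, ys k) with hpairdef
  have transport : ∑ zs : Fin m → Finset (Fin n) × Finset (Fin n), W P2 zs * Iv (B1 w r zs)
      = ∑ xs : Fin m → Finset (Fin n), ∑ ys : Fin m → Finset (Fin n),
          (W P xs * W P ys) * Iv (B1 w r (pair xs ys)) := by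
    rw [← Equiv.sum_comp (Equiv.arrowProdEquivProdArrow (Fin m) (fun _ => Finset (Fin n)) (fun _ => Finset (Fin n))).symm
        (fun zs => W P2 zs * Iv (B1 w r zs)), Fintype.sum_prod_type]
    apply Finset.sum_congr rfl; intro xs _
    apply Finset.sum_congr rfl; intro ys _
    have h1' : (Equiv.arrowProdEquivProdArrow (Fin m) (fun _ => Finset (Fin n)) (fun _ => Finset (Fin n))).symm (xs, ys) = pair xs ys := by
      funext k
      simp [Equiv.arrowProdEquivProdArrow, hpairdef]
    show W P2 ((Equiv.arrowProdEquivProdArrow (Fin m) (fun _ => Finset (Fin n)) (fun _ => Finset (Fin n))).symm (xs, ys)) *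
        Iv (B1 w r ((Equiv.arrowProdEquivProdArrow (Fin m) (fun _ => Finset (Fin n)) (fun _ => Finset (Fin n))).symm (xs, ys)))
      = (W P xs * W P ys) * Iv (B1 w r (pair xs ys))
    rw [h1']
    congr 1
    rw [W, W, W, ← Finset.prod_mul_distrib]
  have key : ∀ xs ys : Fin m → Finset (Fin n),
      (W P xs * Iv (Bad0 w P δ xs)) *
        (W P ys * Iv (r ≤ ((univ : Finset (Fin m)).filter
          (fun k => ¬ sat w (wθ xs).1 (wθ xs).2 (ys k))).card))
      ≤ (W P xs * W P ys) * Iv (B1 w r (pair xs ys)) := by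
    intro xs ys
    by_cases hB : Bad0 w P δ xs
    · by_cases hC : r ≤ ((univ : Finset (Fin m)).filter
          (fun k => ¬ sat w (wθ xs).1 (wθ xs).2 (ys k))).card
      · have hB1 : B1 w r (pair xs ys) := by
          refine ⟨(wθ xs).1, (wθ xs).2, ?_, ?_⟩
          · intro k
            exact (wspec xs hB).1 k
          · exact le_trans hC (le_of_eq rfl)
        rw [Iv_true hB, Iv_true hC, Iv_true hB1]
        exact le_of_eq (by ring)
      · rw [Iv_false hC]
        nlinarith [Iv_nonneg (B1 w r (pair xs ys)), Iv_nonneg (Bad0 w P δ xs),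
          W_nonneg P hP xs, W_nonneg P hP ys, Iv_le_one (Bad0 w P δ xs),
          mul_nonneg (W_nonneg P hP xs) (W_nonneg P hP ys)]
    · rw [Iv_false hB]
      nlinarith [Iv_nonneg (B1 w r (pair xs ys)),
        Iv_nonneg (r ≤ ((univ : Finset (Fin m)).filter
          (fun k => ¬ sat w (wθ xs).1 (wθ xs).2 (ys k))).card),
        Iv_le_one (r ≤ ((univ : Finset (Fin m)).filter
          (fun k => ¬ sat w (wθ xs).1 (wθ xs).2 (ys k))).card),
        W_nonneg P hP xs, W_nonneg P hP ys,
        mul_nonneg (W_nonneg P hP xs) (W_nonneg P hP ys)]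
  have chebxs : ∀ xs : Fin m → Finset (Fin n),
      W P xs * Iv (Bad0 w P δ xs) * (1/2)
        ≤ W P xs * Iv (Bad0 w P δ xs) *
            (∑ ys : Fin m → Finset (Fin n), W P ys *
              Iv (r ≤ ((univ : Finset (Fin m)).filter
              (fun k => ¬ sat w (wθ xs).1 (wθ xs).2 (ys k))).card)) := by
    intro xs
    by_cases hB : Bad0 w P δ xs
    · apply mul_le_mul_of_nonneg_left _ (mul_nonneg (W_nonneg P hP xs) (Iv_nonneg _))
      have hq := (wspec xs hB).2
      apply cheb P hP h1 (fun x => sat w (wθ xs).1 (wθ xs).2 x) r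
      · calc (8:ℝ) ≤ δ * m := hδ8
        _ ≤ (∑ x : Finset (Fin n), P x * Iv (¬ sat w (wθ xs).1 (wθ xs).2 x)) * m :=
            mul_le_mul_of_nonneg_right (le_of_lt hq) (Nat.cast_nonneg m)
      · calc (r:ℝ) ≤ δ * m / 2 + 1 := hr
        _ ≤ (∑ x : Finset (Fin n), P x * Iv (¬ sat w (wθ xs).1 (wθ xs).2 x)) * m / 2 + 1 := by
            have : δ * m ≤ (∑ x : Finset (Fin n),
                P x * Iv (¬ sat w (wθ xs).1 (wθ xs).2 x)) * m :=
              mul_le_mul_of_nonneg_right (le_of_lt hq) (Nat.cast_nonneg m)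
            linarith
    · rw [Iv_false hB, mul_zero, zero_mul, zero_mul]
  have chain : (∑ xs : Fin m → Finset (Fin n), W P xs * Iv (Bad0 w P δ xs)) * (1/2)
      ≤ ∑ zs : Fin m → Finset (Fin n) × Finset (Fin n), W P2 zs * Iv (B1 w r zs) := by
    rw [transport, Finset.sum_mul]
    calc ∑ xs : Fin m → Finset (Fin n), W P xs * Iv (Bad0 w P δ xs) * (1/2)
        ≤ ∑ xs : Fin m → Finset (Fin n), W P xs * Iv (Bad0 w P δ xs) *
            (∑ ys : Fin m → Finset (Fin n), W P ys *
              Iv (r ≤ ((univ : Finset (Fin m)).filter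
              (fun k => ¬ sat w (wθ xs).1 (wθ xs).2 (ys k))).card)) :=
          Finset.sum_le_sum fun xs _ => chebxs xs
    _ = ∑ xs : Fin m → Finset (Fin n), ∑ ys : Fin m → Finset (Fin n),
          (W P xs * Iv (Bad0 w P δ xs)) *
            (W P ys * Iv (r ≤ ((univ : Finset (Fin m)).filter
              (fun k => ¬ sat w (wθ xs).1 (wθ xs).2 (ys k))).card)) :=
          Finset.sum_congr rfl fun xs _ => by rw [Finset.mul_sum]
    _ ≤ ∑ xs : Fin m → Finset (Fin n), ∑ ys : Fin m → Finset (Fin n),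
          (W P xs * W P ys) * Iv (B1 w r (pair xs ys)) :=
          Finset.sum_le_sum fun xs _ => Finset.sum_le_sum fun ys _ => key xs ys
  linarith [chain]

end Swap

set_option maxHeartbeats 1000000 in
/-- the numerical estimate -/
lemma numbers (n m : ℕ) (δ Δ : ℝ) (hn : 1 ≤ n) (hδ0 : 0 < δ) (hδ1 : δ < 1)
    (hΔ0 : 0 < Δ) (hΔ1 : Δ < 1)
    (hm : 1000 * ((n:ℝ) + Real.log (1/Δ)) / δ^2 ≤ (m:ℝ)) :
    2 * ((∑ i ∈ range (n+3), ((m+m).choose i : ℝ)) * (1/2)^(⌈δ * m / 2⌉₊)) ≤ Δ := by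
  set L : ℝ := Real.log (1/Δ) with hLdef
  have hL : 0 < L := Real.log_pos (by rw [lt_div_iff₀ hΔ0]; linarith)
  have hnR : (1:ℝ) ≤ (n:ℝ) := by exact_mod_cast hn
  have hδ2 : (0:ℝ) < δ^2 := by positivity
  have hm' : 1000 * ((n:ℝ) + L) ≤ (m:ℝ) * δ^2 := (div_le_iff₀ hδ2).mp hm
  have hnL : (0:ℝ) < (n:ℝ) + L := by linarith
  have hδu : 1000 * ((n:ℝ) + L) ≤ δ * (δ * m) := by
    have : δ * (δ * m) = (m:ℝ) * δ^2 := by ring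
    linarith
  have hδδ : δ^2 ≤ δ := by nlinarith
  have hbase : 1000 * ((n:ℝ) + L) ≤ δ * m := by
    have h1 : (m:ℝ) * δ^2 ≤ (m:ℝ) * δ := mul_le_mul_of_nonneg_left hδδ (Nat.cast_nonneg m)
    have h2 : (m:ℝ) * δ = δ * m := by ring
    linarith
  have h8 : (8:ℝ) ≤ δ * m := by linarith
  have hδm_le : δ * m ≤ (m:ℝ) := by
    have := mul_le_of_le_one_left (Nat.cast_nonneg m : (0:ℝ) ≤ (m:ℝ)) hδ1.le
    linarith [this]
  have hmR : (8:ℝ) ≤ (m:ℝ) := by linarith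
  have hm0 : (0:ℝ) < (m:ℝ) := by linarith
  have hDN : n + 2 ≤ m + m := by
    have h1 : ((n:ℝ)) + 2 ≤ (m:ℝ) + (m:ℝ) := by linarith
    exact_mod_cast h1
  have hD1 : 1 ≤ n + 2 := by omega
  have hbin := binom_bound (m+m) (n+2) hD1 hDN
  set r : ℕ := ⌈δ * m / 2⌉₊ with hrdef
  have hrge : δ * m / 2 ≤ (r:ℝ) := Nat.le_ceil _
  set l2 : ℝ := Real.log 2 with hl2def
  have hl2a : (0.69:ℝ) ≤ l2 := by
    have := Real.log_two_gt_d9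
    rw [hl2def]; linarith
  have hl2b : l2 ≤ (0.7:ℝ) := by
    have := Real.log_two_lt_d9
    rw [hl2def]; linarith
  set x : ℝ := ((m:ℝ) + (m:ℝ)) / ((n:ℝ) + 2) with hxdef
  have hA : (0:ℝ) < (n:ℝ) + 2 := by linarith
  have hx : 0 < x := by positivity
  have hcastN : ((m+m : ℕ) : ℝ) = (m:ℝ) + (m:ℝ) := by push_cast; ring
  have hcastD : ((n+2 : ℕ) : ℝ) = (n:ℝ) + 2 := by push_cast; ring
  have hbin' : (∑ i ∈ range (n+3), ((m+m).choose i : ℝ))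
      ≤ x ^ (n+2) * Real.exp (((n:ℝ)+2)) := by
    calc (∑ i ∈ range (n+3), ((m+m).choose i : ℝ))
        ≤ (((m+m:ℕ):ℝ) / ((n+2:ℕ):ℝ))^(n+2) * Real.exp ((n+2:ℕ)) := hbin
    _ = x ^ (n+2) * Real.exp (((n:ℝ)+2)) := by rw [hcastN, hcastD]
  have hpowx : x ^ (n+2) = Real.exp (((n:ℝ)+2) * Real.log x) := by
    conv_lhs => rw [← Real.exp_log hx]
    rw [← Real.exp_nat_mul]
    congr 1
    push_cast; ring
  have hhalf : ((1:ℝ)/2)^r = Real.exp (-((r:ℝ) * l2)) := by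
    have h12 : (0:ℝ) < 1/2 := by norm_num
    conv_lhs => rw [← Real.exp_log h12]
    rw [← Real.exp_nat_mul]
    congr 1
    rw [one_div, Real.log_inv, hl2def]
    ring
  -- exponent estimate
  set α : ℝ := δ * l2 / 8 with hαdef
  have hα : 0 < α := by
    rw [hαdef]
    have : (0:ℝ) < l2 := by linarith
    positivity
  have hα1 : α < 1 := by
    rw [hαdef]
    nlinarith
  set G : ℝ := Real.log (1/α) with hGdef
  have hG0 : 0 < G := Real.log_pos (by rw [lt_div_iff₀ hα]; linarith)
  have hGδ : δ * G ≤ 12 := by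
    have h1 := Real.log_le_sub_one_of_pos (by positivity : (0:ℝ) < 1/α)
    rw [← hGdef] at h1
    have h2 : (1:ℝ)/α = 8 / (δ * l2) := by
      rw [hαdef]; field_simp
    have h3 : δ * ((1:ℝ)/α) ≤ 12 := by
      rw [h2]
      have he : δ * (8 / (δ * l2)) = 8 / l2 := by
        field_simp
      rw [he, div_le_iff₀ (by linarith : (0:ℝ) < l2)]
      linarith
    have h4 : δ * G ≤ δ * ((1:ℝ)/α - 1) := mul_le_mul_of_nonneg_left h1 hδ0.le
    have h5 : δ * ((1:ℝ)/α - 1) = δ * ((1:ℝ)/α) - δ := by ring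
    linarith
  have hlogα : Real.log α = - G := by
    rw [hGdef, one_div, Real.log_inv]; ring
  have hlogx : Real.log x ≤ α * x - 1 + G := by
    have h1 := Real.log_le_sub_one_of_pos (mul_pos hα hx)
    rw [Real.log_mul (ne_of_gt hα) (ne_of_gt hx), hlogα] at h1
    linarith
  have hxA : x * ((n:ℝ) + 2) = (m:ℝ) + (m:ℝ) := by
    rw [hxdef]; field_simp
  have hαm : α * ((m:ℝ) + (m:ℝ)) = δ * l2 * m / 4 := by
    rw [hαdef]; ring
  have e1 : ((n:ℝ)+2) * Real.log x + ((n:ℝ)+2)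
      ≤ δ * l2 * m / 4 + ((n:ℝ)+2) * G := by
    have h1 := mul_le_mul_of_nonneg_left hlogx (le_of_lt hA)
    have h2 : ((n:ℝ)+2) * (α * x - 1 + G)
        = α * (x * ((n:ℝ)+2)) - ((n:ℝ)+2) + ((n:ℝ)+2) * G := by ring
    rw [h2, hxA, hαm] at h1
    linarith
  -- the key numeric inequality
  have hkey : l2 + (δ * l2 * m / 4 + ((n:ℝ)+2) * G) + L ≤ (δ * m / 2) * l2 := by
    -- multiply through by δ
    have c2 : 1000 * ((n:ℝ)+L) * 0.69 ≤ (δ * (δ * m)) * l2 := by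
      apply mul_le_mul hδu hl2a (by norm_num)
      linarith
    have c3 : δ * (((n:ℝ)+2) * G) ≤ 12 * ((n:ℝ)+2) := by
      have := mul_le_mul_of_nonneg_left hGδ (le_of_lt hA)
      nlinarith
    have c4 : δ * l2 ≤ 0.7 := by nlinarith
    have c5 : δ * L ≤ L := by nlinarith
    have main : δ * (l2 + (δ * l2 * m / 4 + ((n:ℝ)+2) * G) + L)
        ≤ δ * ((δ * m / 2) * l2) := by
      have lhs_eq : δ * (l2 + (δ * l2 * m / 4 + ((n:ℝ)+2) * G) + L)
          = δ * l2 + (δ * (δ * m)) * l2 / 4 + δ * (((n:ℝ)+2) * G) + δ * L := by ring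
      have rhs_eq : δ * ((δ * m / 2) * l2) = (δ * (δ * m)) * l2 / 2 := by ring
      rw [lhs_eq, rhs_eq]
      linarith
    exact le_of_mul_le_mul_left main hδ0
  have hexp : l2 + (((n:ℝ)+2) * Real.log x + ((n:ℝ)+2)) - (r:ℝ) * l2 ≤ Real.log Δ := by
    have hlogΔ : Real.log Δ = - L := by
      rw [hLdef, one_div, Real.log_inv]; ring
    rw [hlogΔ]
    have hrl2 : (δ * m / 2) * l2 ≤ (r:ℝ) * l2 :=
      mul_le_mul_of_nonneg_right hrge (by linarith)
    linarith
  -- assemble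
  have hhalfpos : (0:ℝ) ≤ ((1:ℝ)/2)^r := by positivity
  calc 2 * ((∑ i ∈ range (n+3), ((m+m).choose i : ℝ)) * (1/2)^r)
      ≤ 2 * ((x ^ (n+2) * Real.exp (((n:ℝ)+2))) * (1/2)^r) := by
        apply mul_le_mul_of_nonneg_left _ (by norm_num)
        exact mul_le_mul_of_nonneg_right hbin' hhalfpos
  _ = Real.exp (l2 + (((n:ℝ)+2) * Real.log x + ((n:ℝ)+2)) - (r:ℝ) * l2) := by
        rw [hpowx, hhalf]
        rw [show (2:ℝ) = Real.exp l2 from (Real.exp_log (by norm_num)).symm]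
        rw [← Real.exp_add, ← Real.exp_add, ← Real.exp_add]
        congr 1
        ring
  _ ≤ Real.exp (Real.log Δ) := Real.exp_le_exp.mpr hexp
  _ = Δ := Real.exp_log hΔ0

end Stmt8

open Stmt8 in
set_option maxHeartbeats 1000000 in
/-- There is a universal constant C such that for any game (N, w),
any distribution P over nonempty coalitions, and m ≥ C(n + log(1/Δ))/δ² i.i.d.
sampled coalitions, with probability ≥ 1 − Δ over the samples: any feasible
solution (π̂, π̂₀, ε̂) of the sampled quadratic program (nonnegative, budget
balanced, satisfying the sampled ε-core constraints) lies in the δ-probable core,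
i.e. Pr_{S∼P}[Σ_{i∈S} π̂ᵢ + π̂₀ + ε̂ ≥ w(S)] ≥ 1 − δ. -/
theorem stmt8 :
    ∃ C : ℝ, 0 < C ∧
      ∀ (n : ℕ) (w : Finset (Fin n) → ℝ) (hw0 : w ∅ = 0)
        (P : Finset (Fin n) → ℝ),
        (∀ S, 0 ≤ P S) → (∑ S, P S) = 1 → P ∅ = 0 →
        ∀ (δ Δ : ℝ), 0 < δ → δ < 1 → 0 < Δ → Δ < 1 →
        ∀ m : ℕ, C * ((n : ℝ) + Real.log (1 / Δ)) / δ ^ 2 ≤ (m : ℝ) →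
        -- (π̂, π̂₀, ε̂) is the (sample-dependent) solution of the sampled program
        ∀ (πh : (Fin m → Finset (Fin n)) → Fin n → ℝ)
          (π0h εh : (Fin m → Finset (Fin n)) → ℝ),
          (∀ xs, (∀ i, 0 ≤ πh xs i) ∧ 0 ≤ π0h xs ∧ 0 ≤ εh xs ∧
            (∑ i, πh xs i) + π0h xs = w Finset.univ) →
          -- probability (under m i.i.d. draws from P) of the event:
          -- "feasibility on all sampled coalitions implies δ-probable core"
          (∑ xs ∈ Finset.univ.filter
              (fun xs : Fin m → Finset (Fin n) =>
                (∀ k : Fin m,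
                    (∑ i ∈ xs k, πh xs i) + π0h xs + εh xs ≥ w (xs k)) →
                (∑ S ∈ Finset.univ.filter
                    (fun S : Finset (Fin n) =>
                      (∑ i ∈ S, πh xs i) + π0h xs + εh xs ≥ w S), P S)
                  ≥ 1 - δ),
            ∏ k : Fin m, P (xs k)) ≥ 1 - Δ := by
  classical
  refine ⟨1000, by norm_num, ?_⟩
  intro n w _hw0 P hP hsum hPempty δ Δ hδ0 hδ1 hΔ0 hΔ1 m hm πh π0h εh _hfeas
  -- n = 0 is impossible
  rcases Nat.eq_zero_or_pos n with hn0 | hn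
  · exfalso
    subst hn0
    have h0 : (∑ S : Finset (Fin 0), P S) = P ∅ := by
      rw [Finset.sum_eq_single ∅]
      · intro S _ hS
        exfalso
        exact hS (Finset.eq_empty_of_forall_notMem (fun x => x.elim0))
      · intro h
        exact absurd (Finset.mem_univ _) h
    rw [h0, hPempty] at hsum
    norm_num at hsum
  -- numeric preliminaries
  set L : ℝ := Real.log (1/Δ) with hLdef
  have hL : 0 < L := Real.log_pos (by rw [lt_div_iff₀ hΔ0]; linarith)
  have hnR : (1:ℝ) ≤ (n:ℝ) := by exact_mod_cast hn
  have hδ2 : (0:ℝ) < δ^2 := by positivity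
  have hm' : 1000 * ((n:ℝ) + L) ≤ (m:ℝ) * δ^2 := (div_le_iff₀ hδ2).mp hm
  have hδδ : δ^2 ≤ δ := by nlinarith
  have hbase : 1000 * ((n:ℝ) + L) ≤ δ * m := by
    have h1 : (m:ℝ) * δ^2 ≤ (m:ℝ) * δ := mul_le_mul_of_nonneg_left hδδ (Nat.cast_nonneg m)
    have h2 : (m:ℝ) * δ = δ * m := by ring
    linarith
  have h8 : (8:ℝ) ≤ δ * m := by linarith
  set r : ℕ := ⌈δ * m / 2⌉₊ with hrdef
  have hrle : (r:ℝ) ≤ δ * m / 2 + 1 :=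
    (Nat.ceil_lt_add_one (by positivity : (0:ℝ) ≤ δ * m / 2)).le
  -- the Good event
  set Good : (Fin m → Finset (Fin n)) → Prop :=
    fun xs =>
      (∀ k : Fin m, (∑ i ∈ xs k, πh xs i) + π0h xs + εh xs ≥ w (xs k)) →
      (∑ S ∈ Finset.univ.filter
        (fun S : Finset (Fin n) =>
          (∑ i ∈ S, πh xs i) + π0h xs + εh xs ≥ w S), P S) ≥ 1 - δ
    with hGooddef
  have hsplit := Finset.sum_filter_add_sum_filter_not
    (univ : Finset (Fin m → Finset (Fin n))) Good (fun xs => W P xs)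
  have hWone : (∑ xs : Fin m → Finset (Fin n), W P xs) = 1 := sum_W P hsum
  -- the bad part is bounded by the Bad0 indicator sum
  have hbad1 : (∑ xs ∈ univ.filter (fun xs => ¬ Good xs), W P xs)
      ≤ ∑ xs : Fin m → Finset (Fin n), W P xs * Iv (Bad0 w P δ xs) := by
    rw [Finset.sum_filter]
    apply Finset.sum_le_sum
    intro xs _
    by_cases h : ¬ Good xs
    · rw [if_pos h]
      have hbad : Bad0 w P δ xs := by
        rw [hGooddef] at h
        rw [Classical.not_imp] at h
        obtain ⟨hcons, hconc⟩ := h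
        push_neg at hconc
        refine ⟨πh xs, π0h xs + εh xs, ?_, ?_⟩
        · intro k
          have := hcons k
          rw [sat]
          linarith
        · have hiff : ∀ S : Finset (Fin n),
              ((∑ i ∈ S, πh xs i) + π0h xs + εh xs ≥ w S) ↔ sat w (πh xs) (π0h xs + εh xs) S := by
            intro S
            rw [sat]
            constructor <;> intro <;> linarith
          have hq : ∑ x : Finset (Fin n), P x * Iv (¬ sat w (πh xs) (π0h xs + εh xs) x)
              = 1 - ∑ S ∈ Finset.univ.filter
                (fun S : Finset (Fin n) =>
                  (∑ i ∈ S, πh xs i) + π0h xs + εh xs ≥ w S), P S := by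
            rw [Finset.sum_filter]
            rw [← hsum, ← Finset.sum_sub_distrib]
            apply Finset.sum_congr rfl
            intro S _
            rw [Iv_not]
            by_cases hS : sat w (πh xs) (π0h xs + εh xs) S
            · rw [Iv_true hS, if_pos ((hiff S).mpr hS)]
              ring
            · rw [Iv_false hS, if_neg (fun hc => hS ((hiff S).mp hc))]
              ring
          rw [hq]
          linarith
      rw [Iv_true hbad, mul_one]
    · rw [if_neg h]
      exact mul_nonneg (W_nonneg P hP xs) (Iv_nonneg _)
  -- chain of bounds
  have hsym := symmetrize w P hP hsum δ r h8 hrle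
  have hswap := swap_bound (m := m) w P hP hsum r
  have hnum := numbers n m δ Δ hn hδ0 hδ1 hΔ0 hΔ1 hm
  have hchain : (∑ xs ∈ univ.filter (fun xs => ¬ Good xs), W P xs) ≤ Δ := by
    calc (∑ xs ∈ univ.filter (fun xs => ¬ Good xs), W P xs)
        ≤ ∑ xs : Fin m → Finset (Fin n), W P xs * Iv (Bad0 w P δ xs) := hbad1
    _ ≤ 2 * ∑ zs : Fin m → (Finset (Fin n) × Finset (Fin n)),
          W (fun z => P z.1 * P z.2) zs * Iv (B1 w r zs) := hsym
    _ ≤ 2 * ((∑ i ∈ range (n+3), ((m+m).choose i : ℝ)) * (1/2)^r) := by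
          linarith [hswap]
    _ ≤ Δ := hnum
  -- conclude
  have hgoal : (∑ xs ∈ univ.filter Good, W P xs) ≥ 1 - Δ := by
    have := hsplit
    linarith
  calc (∑ xs ∈ Finset.univ.filter
      (fun xs : Fin m → Finset (Fin n) =>
        (∀ k : Fin m, (∑ i ∈ xs k, πh xs i) + π0h xs + εh xs ≥ w (xs k)) →
        (∑ S ∈ Finset.univ.filter
          (fun S : Finset (Fin n) =>
            (∑ i ∈ S, πh xs i) + π0h xs + εh xs ≥ w S), P S) ≥ 1 - δ),
      ∏ k : Fin m, P (xs k))
      = ∑ xs ∈ univ.filter Good, W P xs := rfl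
  _ ≥ 1 - Δ := hgoal
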